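/- A function f ∈ L²(0,1) belongs to the polar cone K° of the cone K of nondecreasing functions if and only if its primitive F(w) = ∫₀ʷ f(s) ds satisfies F ≥ 0 on [0,1] and F(0) = F(1) = 0. -/

import Mathlib

open MeasureTheory Set Filter Topology

noncomputable section

/-- Lebesgue measure restricted to the interval (0,1). -/
def μ01 : MeasureTheory.Measure ℝ := MeasureTheory.volume.restrict (Set.Ioo 0 1)

/-- The convex cone `K` of (essentially) nondecreasing functions in L²(0,1). -/
def coneK : Set (ℝ → ℝ) := {g | MonotoneOn g (Set.Ioo 0 1) ∧ MeasureTheory.MemLp g 2 μ01}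

/-- `g` is the L²(0,1)-orthogonal projection of `f` onto the cone `K`,
characterized by the variational inequality `⟨f - g, z - g⟩ ≤ 0` for all `z ∈ K`. -/
def IsProjK (f g : ℝ → ℝ) : Prop :=
  g ∈ coneK ∧ ∀ z ∈ coneK, (∫ w in Set.Ioo (0:ℝ) 1, (f w - g w) * (z w - g w)) ≤ 0

/-- The convex envelope of `F` on `[0,1]`: the supremum of affine functions below `F` there. -/
def convEnv (F : ℝ → ℝ) (w : ℝ) : ℝ :=
  sSup {y | ∃ a b : ℝ, y = a + b * w ∧ ∀ v ∈ Set.Icc (0:ℝ) 1, a + b * v ≤ F v}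

/-- The open set `Ω_g ⊆ (0,1)` of points near which `g` is essentially constant. -/
def locConstSet (g : ℝ → ℝ) : Set ℝ :=
  {w | w ∈ Set.Ioo (0:ℝ) 1 ∧ ∃ a b c : ℝ, a < w ∧ w < b ∧
    ∀ᵐ x ∂μ01, x ∈ Set.Ioo a b → g x = c}

/-- The closed subspace `H_g` of L²(0,1) functions essentially constant on each
open interval contained in `Ω_g`. -/
def Hspace (g : ℝ → ℝ) : Set (ℝ → ℝ) :=
  {u | MeasureTheory.MemLp u 2 μ01 ∧ ∀ a b : ℝ, Set.Ioo a b ⊆ locConstSet g →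
    ∃ c : ℝ, ∀ᵐ x ∂μ01, x ∈ Set.Ioo a b → u x = c}

/-- `ξ` belongs to the subdifferential `∂I_K(g)` of the indicator function of `K` at `g ∈ K`. -/
def subdiffIK (g ξ : ℝ → ℝ) : Prop :=
  g ∈ coneK ∧ ∀ z ∈ coneK, (∫ w in Set.Ioo (0:ℝ) 1, ξ w * (z w - g w)) ≤ 0


instance : IsFiniteMeasure μ01 := by
  constructor; simp [μ01, Real.volume_Ioo]

lemma integrable_of_mem2 {f : ℝ → ℝ} (hf : MemLp f 2 μ01) : Integrable f μ01 :=
  memLp_one_iff_integrable.mp (hf.mono_exponent (by norm_num))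


lemma ae_eq_stieltjes (g : ℝ → ℝ) (hg : Monotone g) :
    ∀ᵐ x ∂μ01, g x = hg.stieltjesFunction x := by
  have hD : μ01 {x | ¬ContinuousAt g x} = 0 := by
    have h1 : MeasureTheory.volume {x | ¬ContinuousAt g x} = 0 :=
      (hg.countable_not_continuousAt).measure_zero _
    exact le_antisymm (le_trans (Measure.restrict_le_self _) h1.le) zero_le
  have hae : ∀ᵐ x ∂μ01, ContinuousAt g x := ae_iff.mpr hD
  filter_upwards [hae] with x hx
  rw [hg.stieltjesFunction_eq]
  exact (rightLim_eq_of_tendsto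
    (hx.tendsto.mono_left nhdsWithin_le_nhds)).symm



lemma ii01 {f : ℝ → ℝ} (hf : MemLp f 2 μ01) {a b : ℝ} (ha : 0 ≤ a) (hab : a ≤ b) (hb : b ≤ 1) :
    IntervalIntegrable f volume a b := by
  rw [intervalIntegrable_iff_integrableOn_Ioc_of_le hab, integrableOn_Ioc_iff_integrableOn_Ioo]
  have h0 : IntegrableOn f (Ioo 0 1) volume := integrable_of_mem2 hf
  exact h0.mono_set (fun x hx => ⟨lt_of_le_of_lt ha hx.1, lt_of_lt_of_le hx.2 hb⟩)

lemma int_Ioo_eq_F {f F : ℝ → ℝ} (hf : MemLp f 2 μ01)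
    (hF : ∀ w, F w = ∫ s in (0:ℝ)..w, f s) :
    (∫ w in Set.Ioo (0:ℝ) 1, f w) = F 1 := by
  rw [hF 1, intervalIntegral.integral_of_le zero_le_one, integral_Ioc_eq_integral_Ioo]

lemma int_Ico_eq {f F : ℝ → ℝ} (hf : MemLp f 2 μ01)
    (hF : ∀ w, F w = ∫ s in (0:ℝ)..w, f s) {t : ℝ} (ht : t ∈ Set.Ioc (0:ℝ) 1) :
    (∫ w in Set.Ico t 1, f w) = F 1 - F t := by
  rw [integral_Ico_eq_integral_Ioo, ← integral_Ioc_eq_integral_Ioo,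
    ← intervalIntegral.integral_of_le ht.2, hF 1, hF t,
    ← intervalIntegral.integral_add_adjacent_intervals (ii01 hf le_rfl ht.1.le ht.2)
      (ii01 hf ht.1.le ht.2 le_rfl)]
  ring

lemma key_bounded (f F : ℝ → ℝ) (hf : MemLp f 2 μ01)
    (hF : ∀ w, F w = ∫ s in (0:ℝ)..w, f s)
    (hpos : ∀ w ∈ Set.Icc (0:ℝ) 1, 0 ≤ F w) (hF1 : F 1 = 0)
    (g : ℝ → ℝ) (hg : Monotone g) :
    (∫ w in Set.Ioo (0:ℝ) 1, f w * g w) ≤ 0 := by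
  classical
  set h := hg.stieltjesFunction with hh
  set ν := h.measure with hν
  set νr := ν.restrict (Set.Ioc 0 1) with hνr
  have hfint : Integrable f μ01 := integrable_of_mem2 hf
  have hνfin : IsFiniteMeasure νr := by
    constructor
    rw [hνr, Measure.restrict_apply_univ, StieltjesFunction.measure_Ioc]
    exact ENNReal.ofReal_lt_top
  -- replace g by h
  have step1 : (∫ w in Set.Ioo (0:ℝ) 1, f w * g w) = ∫ w, f w * h w ∂μ01 := by
    refine integral_congr_ae ?_
    filter_upwards [ae_eq_stieltjes g hg] with x hx
    rw [hx]
  rw [step1]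
  -- the kernel
  set G : ℝ × ℝ → ℝ := fun p => f p.1 * (Set.Iic p.1).indicator (fun _ => (1:ℝ)) p.2 with hG
  -- measurability of G
  have hGmeas : AEStronglyMeasurable G (μ01.prod νr) := by
    have hfst : AEStronglyMeasurable (fun p : ℝ × ℝ => f p.1) (μ01.prod νr) := by
      have hmap : Measure.map Prod.fst (μ01.prod νr) = (νr Set.univ) • μ01 :=
        Measure.map_fst_prod
      have h1 : AEStronglyMeasurable f ((νr Set.univ) • μ01) :=
        hf.aestronglyMeasurable.mono_ac MeasureTheory.Measure.smul_absolutelyContinuous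
      have h2 : AEStronglyMeasurable f (Measure.map Prod.fst (μ01.prod νr)) := by
        rwa [hmap]
      exact h2.comp_aemeasurable measurable_fst.aemeasurable
    have hset : MeasurableSet {p : ℝ × ℝ | p.2 ≤ p.1} :=
      measurableSet_le measurable_snd measurable_fst
    have hind : AEStronglyMeasurable
        (fun p : ℝ × ℝ => ({p : ℝ × ℝ | p.2 ≤ p.1}).indicator (fun _ => (1:ℝ)) p)
        (μ01.prod νr) :=
      (stronglyMeasurable_const.indicator hset).aestronglyMeasurable
    have : G = fun p : ℝ × ℝ =>
        f p.1 * ({p : ℝ × ℝ | p.2 ≤ p.1}).indicator (fun _ => (1:ℝ)) p := by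
      funext p
      simp only [hG, Set.indicator_apply, Set.mem_Iic, Set.mem_setOf_eq]
    rw [this]
    exact hfst.mul hind
  -- integrability of the first-coordinate function
  have hfstint : Integrable (fun p : ℝ × ℝ => f p.1) (μ01.prod νr) := by
    have hmap : Measure.map Prod.fst (μ01.prod νr) = (νr Set.univ) • μ01 :=
      Measure.map_fst_prod
    have h1 : Integrable f ((νr Set.univ) • μ01) :=
      hfint.smul_measure (measure_ne_top νr _)
    have h2 : Integrable f (Measure.map Prod.fst (μ01.prod νr)) := by rwa [hmap]
    have h3 : AEStronglyMeasurable f (Measure.map Prod.fst (μ01.prod νr)) := h2.1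
    exact (integrable_map_measure h3 measurable_fst.aemeasurable).mp h2
  -- integrability of G
  have hGint : Integrable G (μ01.prod νr) := by
    refine Integrable.mono' hfstint.norm hGmeas ?_
    refine Eventually.of_forall fun p => ?_
    simp only [hG, norm_mul, Real.norm_eq_abs]
    by_cases hp : p.2 ∈ Set.Iic p.1 <;>
      simp [Set.indicator_of_mem, Set.indicator_of_notMem, hp, abs_nonneg]
  -- pointwise marginal identity
  have hmarg : ∀ w : ℝ, (∫ t, G (w, t) ∂νr) = f w * (νr (Set.Iic w)).toReal := by
    intro w
    have e : ∀ t : ℝ, G (w, t) = f w * (Set.Iic w).indicator (fun _ => (1:ℝ)) t :=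
      fun t => rfl
    calc (∫ t, G (w, t) ∂νr)
        = ∫ t, f w * (Set.Iic w).indicator (fun _ => (1:ℝ)) t ∂νr := by
          exact integral_congr_ae (Eventually.of_forall e)
      _ = f w * ∫ t, (Set.Iic w).indicator (fun _ => (1:ℝ)) t ∂νr :=
          integral_const_mul _ _
      _ = f w * (νr (Set.Iic w)).toReal := by
          rw [integral_indicator_const (1:ℝ) measurableSet_Iic, smul_eq_mul, mul_one, measureReal_def]
  have hae01 : ∀ᵐ w ∂μ01, w ∈ Set.Ioo (0:ℝ) 1 := by
    rw [show μ01 = volume.restrict (Set.Ioo 0 1) from rfl]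
    exact ae_restrict_mem measurableSet_Ioo
  -- a.e. representation of h
  have hrep : ∀ᵐ w ∂μ01, f w * h w = f w * h 0 + ∫ t, G (w, t) ∂νr := by
    filter_upwards [hae01] with w hw
    have hseteq : Set.Iic w ∩ Set.Ioc 0 1 = Set.Ioc 0 w := by
      ext x
      simp only [Set.mem_inter_iff, Set.mem_Iic, Set.mem_Ioc]
      constructor
      · rintro ⟨h1, h2, _⟩; exact ⟨h2, h1⟩
      · rintro ⟨h1, h2⟩; exact ⟨h2, h1, le_trans h2 hw.2.le⟩
    have hval : νr (Set.Iic w) = ENNReal.ofReal (h w - h 0) := by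
      rw [hνr, Measure.restrict_apply measurableSet_Iic, hseteq, hν,
        StieltjesFunction.measure_Ioc]
    rw [hmarg w, hval, ENNReal.toReal_ofReal (by
      have := h.mono hw.1.le
      linarith)]
    ring
  have hsplit : (∫ w, f w * h w ∂μ01)
      = (∫ w, f w ∂μ01) * h 0 + ∫ w, (∫ t, G (w, t) ∂νr) ∂μ01 := by
    rw [integral_congr_ae hrep,
      integral_add (hfint.mul_const (h 0)) hGint.integral_prod_left,
      integral_mul_const]
  have hf1 : (∫ w, f w ∂μ01) = F 1 := int_Ioo_eq_F hf hF
  -- Fubini swap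
  have hswap : (∫ w, (∫ t, G (w, t) ∂νr) ∂μ01) = ∫ t, (∫ w, G (w, t) ∂μ01) ∂νr :=
    integral_integral_swap hGint
  -- the inner integral is nonpositive
  have hinner : ∀ᵐ t ∂νr, (∫ w, G (w, t) ∂μ01) ≤ 0 := by
    have hmem : ∀ᵐ t ∂νr, t ∈ Set.Ioc (0:ℝ) 1 := by
      rw [hνr]; exact ae_restrict_mem measurableSet_Ioc
    filter_upwards [hmem] with t ht
    have e : (fun w => G (w, t)) = (Set.Ici t).indicator f := by
      funext w
      simp only [hG, Set.indicator_apply, Set.mem_Iic, Set.mem_Ici]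
      by_cases htw : t ≤ w <;> simp [htw]
    have hset2 : Set.Ici t ∩ Set.Ioo 0 1 = Set.Ico t 1 := by
      ext x
      simp only [Set.mem_inter_iff, Set.mem_Ici, Set.mem_Ioo, Set.mem_Ico]
      constructor
      · rintro ⟨h1, _, h3⟩; exact ⟨h1, h3⟩
      · rintro ⟨h1, h3⟩; exact ⟨h1, lt_of_lt_of_le ht.1 h1, h3⟩
    rw [e, integral_indicator measurableSet_Ici,
      show μ01 = volume.restrict (Set.Ioo 0 1) from rfl,
      Measure.restrict_restrict measurableSet_Ici, hset2, int_Ico_eq hf hF ht, hF1]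
    have := hpos t ⟨ht.1.le, ht.2⟩
    linarith
  have hle : (∫ t, (∫ w, G (w, t) ∂μ01) ∂νr) ≤ 0 := integral_nonpos_of_ae hinner
  calc (∫ w, f w * h w ∂μ01)
      = (∫ w, f w ∂μ01) * h 0 + ∫ w, (∫ t, G (w, t) ∂νr) ∂μ01 := hsplit
    _ = 0 * h 0 + ∫ t, (∫ w, G (w, t) ∂μ01) ∂νr := by rw [hf1, hF1, hswap]
    _ ≤ 0 := by rw [zero_mul, zero_add]; exact hle
lemma const_mem_coneK (c : ℝ) : (fun _ : ℝ => c) ∈ coneK :=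
  ⟨monotoneOn_const, memLp_const c⟩

lemma indicator_mem_coneK (w : ℝ) : (Set.Ici w).indicator (fun _ => (1:ℝ)) ∈ coneK := by
  constructor
  · intro x _ y _ hxy
    by_cases h : w ≤ x
    · simp [Set.indicator_apply, h, le_trans h hxy]
    · by_cases h' : w ≤ y <;> simp [Set.indicator_apply, h, h']
  · exact (memLp_const 1).indicator measurableSet_Ici

lemma forward (f F : ℝ → ℝ) (hf : MeasureTheory.MemLp f 2 μ01)
    (hF : ∀ w, F w = ∫ s in (0:ℝ)..w, f s)
    (hP : ∀ z ∈ coneK, (∫ w in Set.Ioo (0:ℝ) 1, f w * z w) ≤ 0) :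
    ((∀ w ∈ Set.Icc (0:ℝ) 1, 0 ≤ F w) ∧ F 0 = 0 ∧ F 1 = 0) := by
  have hF0 : F 0 = 0 := by simp [hF 0]
  have hF1 : F 1 = 0 := by
    have h1 := hP _ (const_mem_coneK 1)
    have h2 := hP _ (const_mem_coneK (-1))
    simp only [mul_one, mul_neg_one] at h1 h2
    rw [int_Ioo_eq_F hf hF] at h1
    rw [integral_neg, int_Ioo_eq_F hf hF] at h2
    linarith
  refine ⟨fun w hw => ?_, hF0, hF1⟩
  rcases eq_or_lt_of_le hw.1 with h0 | h0
  · rw [← h0, hF0]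
  have h := hP _ (indicator_mem_coneK w)
  have key : (∫ x in Set.Ioo (0:ℝ) 1, f x * (Set.Ici w).indicator (fun _ => (1:ℝ)) x)
      = ∫ x in Set.Ico w 1, f x := by
    have : ∀ x, f x * (Set.Ici w).indicator (fun _ => (1:ℝ)) x
        = (Set.Ici w).indicator f x := by
      intro x; by_cases hx : x ∈ Set.Ici w <;> simp [Set.indicator_apply, hx]
    rw [show (∫ x in Set.Ioo (0:ℝ) 1, f x * (Set.Ici w).indicator (fun _ => (1:ℝ)) x)
        = ∫ x in Set.Ioo (0:ℝ) 1, (Set.Ici w).indicator f x from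
      integral_congr_ae (Eventually.of_forall fun x => this x)]
    have hset : Set.Ici w ∩ Set.Ioo 0 1 = Set.Ico w 1 := by
      ext x
      simp only [Set.mem_inter_iff, Set.mem_Ici, Set.mem_Ioo, Set.mem_Ico]
      constructor
      · rintro ⟨h1, _, h3⟩; exact ⟨h1, h3⟩
      · rintro ⟨h1, h3⟩; exact ⟨h1, lt_of_lt_of_le h0 h1, h3⟩
    rw [integral_indicator measurableSet_Ici, Measure.restrict_restrict measurableSet_Ici, hset]
  rw [key, int_Ico_eq hf hF ⟨h0, hw.2⟩, hF1] at h
  linarith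

lemma reverse (f F : ℝ → ℝ) (hf : MemLp f 2 μ01)
    (hF : ∀ w, F w = ∫ s in (0:ℝ)..w, f s)
    (hpos : ∀ w ∈ Set.Icc (0:ℝ) 1, 0 ≤ F w) (hF1 : F 1 = 0) :
    ∀ z ∈ coneK, (∫ w in Set.Ioo (0:ℝ) 1, f w * z w) ≤ 0 := by
  rintro z ⟨hzm, hz2⟩
  set trunc : ℕ → ℝ → ℝ := fun n x => max (min (z x) (n:ℝ)) (-(n:ℝ)) with htrunc
  -- basic facts about trunc
  have htr_abs : ∀ n x, |trunc n x| ≤ |z x| := by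
    intro n x
    rcases le_or_gt 0 (z x) with hzx | hzx
    · have h1 : trunc n x = min (z x) (n:ℝ) := by
        rw [htrunc]
        exact max_eq_left (le_trans (neg_nonpos.mpr (Nat.cast_nonneg n))
          (le_min hzx (Nat.cast_nonneg n)))
      rw [h1, abs_of_nonneg (le_min hzx (Nat.cast_nonneg n)), abs_of_nonneg hzx]
      exact min_le_left _ _
    · have h1 : trunc n x = max (z x) (-(n:ℝ)) := by
        simp only [htrunc, min_eq_left (le_trans hzx.le (Nat.cast_nonneg n))]
      rw [h1, abs_of_nonpos (max_le hzx.le (neg_nonpos.mpr (Nat.cast_nonneg n))),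
        abs_of_nonpos hzx.le]
      simp only [neg_le_neg_iff]
      exact le_max_left _ _
  have htr_mono : ∀ n, MonotoneOn (trunc n) (Set.Ioo 0 1) := by
    intro n x hx y hy hxy
    exact max_le_max (min_le_min (hzm hx hy hxy) le_rfl) le_rfl
  -- the monotone extension of trunc n
  set gext : ℕ → ℝ → ℝ := fun n x =>
    sSup (insert (-(n:ℝ)) (trunc n '' (Set.Ioo 0 1 ∩ Set.Iic x))) with hgext
  have hub : ∀ (n : ℕ) (x : ℝ), ∀ y ∈ insert (-(n:ℝ)) (trunc n '' (Set.Ioo 0 1 ∩ Set.Iic x)),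
      y ≤ (n:ℝ) := by
    intro n x y hy
    rcases Set.mem_insert_iff.mp hy with rfl | ⟨v, _, rfl⟩
    · linarith [Nat.cast_nonneg (α := ℝ) n]
    · exact max_le (min_le_right _ _) (by linarith [Nat.cast_nonneg (α := ℝ) n])
  have hbdd : ∀ (n : ℕ) (x : ℝ), BddAbove (insert (-(n:ℝ)) (trunc n '' (Set.Ioo 0 1 ∩ Set.Iic x))) :=
    fun n x => ⟨(n:ℝ), fun y hy => hub n x y hy⟩
  have hge_mono : ∀ n, Monotone (gext n) := by
    intro n x y hxy
    refine csSup_le_csSup (hbdd n y) (insert_nonempty _ _) ?_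
    refine insert_subset_insert (image_mono ?_)
    exact inter_subset_inter_right _ (Iic_subset_Iic.mpr hxy)
  have hge_eq : ∀ n, ∀ x ∈ Set.Ioo (0:ℝ) 1, gext n x = trunc n x := by
    intro n x hx
    refine IsGreatest.csSup_eq ⟨?_, ?_⟩
    · exact mem_insert_of_mem _ ⟨x, ⟨hx, Set.self_mem_Iic⟩, rfl⟩
    · intro y hy
      rcases Set.mem_insert_iff.mp hy with rfl | ⟨v, ⟨hv, hvx⟩, rfl⟩
      · exact le_max_right _ _
      · exact htr_mono n hv hx hvx
  -- per-n inequality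
  have hn : ∀ n, (∫ w in Set.Ioo (0:ℝ) 1, f w * trunc n w) ≤ 0 := by
    intro n
    have : (∫ w in Set.Ioo (0:ℝ) 1, f w * trunc n w)
        = ∫ w in Set.Ioo (0:ℝ) 1, f w * gext n w := by
      refine setIntegral_congr_fun measurableSet_Ioo fun x hx => ?_
      rw [hge_eq n x hx]
    rw [this]
    exact key_bounded f F hf hF hpos hF1 (gext n) (hge_mono n)
  -- integrability of f * z
  have hmul : Integrable (fun x => f x * z x) μ01 := by
    have : MemLp (z • f) 1 μ01 := hf.smul hz2 (hpqr := ⟨by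
      rw [ENNReal.inv_two_add_inv_two, inv_one]⟩)
    have := memLp_one_iff_integrable.mp this
    simpa [smul_eq_mul, mul_comm, Pi.mul_def] using this
  -- dominated convergence
  have hlim : Tendsto (fun n => ∫ w, f w * trunc n w ∂μ01) atTop
      (𝓝 (∫ w, f w * z w ∂μ01)) := by
    refine tendsto_integral_of_dominated_convergence (fun w => |f w * z w|)
      (fun n => ?_) hmul.abs ?_ ?_
    · exact hf.aestronglyMeasurable.mul
        (((hz2.aestronglyMeasurable.aemeasurable.min aemeasurable_const).max
          aemeasurable_const).aestronglyMeasurable)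
    · intro n
      refine Eventually.of_forall fun w => ?_
      simp only [Real.norm_eq_abs, abs_mul]
      exact mul_le_mul_of_nonneg_left (htr_abs n w) (abs_nonneg _)
    · refine Eventually.of_forall fun w => ?_
      refine tendsto_atTop_of_eventually_const (i₀ := ⌈|z w|⌉₊) fun n hn => ?_
      have h1 : |z w| ≤ (n:ℝ) := le_trans (Nat.le_ceil _) (Nat.cast_le.mpr hn)
      have h2 : z w ≤ (n:ℝ) := le_trans (le_abs_self _) h1
      have h3 : -(n:ℝ) ≤ z w := by
        rw [neg_le]
        exact le_trans (neg_le_abs _) h1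
      have h4 : trunc n w = z w := by
        simp only [htrunc, min_eq_left h2, max_eq_left h3]
      show f w * trunc n w = f w * z w
      rw [h4]
  exact le_of_tendsto' hlim hn


theorem stmt8 (f F : ℝ → ℝ) (hf : MeasureTheory.MemLp f 2 μ01)
    (hF : ∀ w, F w = ∫ s in (0:ℝ)..w, f s) :
    (∀ z ∈ coneK, (∫ w in Set.Ioo (0:ℝ) 1, f w * z w) ≤ 0) ↔
      ((∀ w ∈ Set.Icc (0:ℝ) 1, 0 ≤ F w) ∧ F 0 = 0 ∧ F 1 = 0) := by
  constructor
  · exact forward f F hf hF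
  · rintro ⟨hpos, _, hF1⟩
    exact reverse f F hf hF hpos hF1
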